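/- Fix an increasing price function P. All zone tariffs with overlap areas (ZOA) with respect to P satisfy the no-stopover property if and only if P is subadditive, i.e., P(k_1 + k_2) ≤ P(k_1) + P(k_2) for all k_1, k_2 ≥ 1. -/

import Mathlib

open scoped Classical

/-- A path in a graph given by adjacency relation `adj`: a nonempty list of
consecutively adjacent nodes. -/
def IsPath {V : Type*} (adj : V → V → Prop) (W : List V) : Prop :=
  W ≠ [] ∧ W.Chain' adj

/-- An `x`-`y`-path. -/
def IsXYPath {V : Type*} (adj : V → V → Prop) (x y : V) (W : List V) : Prop :=
  IsPath adj W ∧ W.head? = some x ∧ W.getLast? = some y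

/-- `W` decomposes as the concatenation `W₁ + W₂` (the last node of `W₁` is the
first node of `W₂`). -/
def Splits {V : Type*} (W W₁ W₂ : List V) : Prop :=
  W₁ ≠ [] ∧ W₂ ≠ [] ∧ W₁.getLast? = W₂.head? ∧ W = W₁ ++ W₂.tail

/-- `W` splits at an intermediate node into `W₁ + W₂` (both parts have at least
two nodes). -/
def SplitsAt {V : Type*} (W W₁ W₂ : List V) : Prop :=
  2 ≤ W₁.length ∧ 2 ≤ W₂.length ∧ W₁.getLast? = W₂.head? ∧ W = W₁ ++ W₂.tail

/-- The no-stopover property: splitting a path at an intermediate node never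
decreases the total price. -/
def NoStopover {V : Type*} (adj : V → V → Prop) (p : List V → ℝ) : Prop :=
  ∀ W W₁ W₂ : List V, IsPath adj W → IsPath adj W₁ → IsPath adj W₂ →
    SplitsAt W W₁ W₂ → p W ≤ p W₁ + p W₂

/-- The no-elongation property: removing the last node of a path never
increases the price. -/
def NoElongation {V : Type*} (adj : V → V → Prop) (p : List V → ℝ) : Prop :=
  ∀ W : List V, IsPath adj W → 2 ≤ W.length → p W.dropLast ≤ p W

/-- Number of consecutive zone changes in a zone assignment. -/
noncomputable def assignmentBorders {Z : Type*} : List Z → ℕ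
  | x :: y :: rest => (if x = y then 0 else 1) + assignmentBorders (y :: rest)
  | _ => 0

/-- An assignment of a zone to each station occurrence of a path, choosing for
each node one of the zones it belongs to. -/
def ValidAssign {V Z : Type*} (zones : V → Set Z) (W : List V) (h : List Z) : Prop :=
  List.Forall₂ (fun v z => z ∈ zones v) W h

/-- Number of zones visited by a path in a zone tariff with overlap areas:
one plus the minimum number of zone changes over all valid assignments. -/
noncomputable def zoaCount {V Z : Type*} (zones : V → Set Z) (W : List V) : ℕ :=
  1 + sInf { b | ∃ h : List Z, ValidAssign zones W h ∧ b = assignmentBorders h }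

section AuxLemmas

lemma ab_nil {Z : Type*} : assignmentBorders ([] : List Z) = 0 := rfl
lemma ab_single {Z : Type*} (x : Z) : assignmentBorders [x] = 0 := rfl
lemma ab_cons_cons {Z : Type*} (x y : Z) (L : List Z) :
    assignmentBorders (x :: y :: L) = (if x = y then 0 else 1) + assignmentBorders (y :: L) := rfl

lemma ab_append {Z : Type*} (A : List Z) (x : Z) (B : List Z) :
    assignmentBorders (A ++ x :: B) = assignmentBorders (A ++ [x]) + assignmentBorders (x :: B) := by
  induction A with
  | nil => simp [ab_single]
  | cons a A ih =>
    cases A with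
    | nil => simp [ab_cons_cons, ab_single]
    | cons a' A' =>
      simp only [List.cons_append, ab_cons_cons] at *
      omega

lemma ab_card {Z : Type*} [DecidableEq Z] (h : List Z) (hne : h ≠ []) :
    h.toFinset.card ≤ assignmentBorders h + 1 := by
  induction h with
  | nil => simp at hne
  | cons x t ih =>
    cases t with
    | nil => simp [ab_single]
    | cons y t' =>
      have := ih (by simp)
      rw [ab_cons_cons]
      by_cases hxy : x = y
      · subst hxy
        simp only [List.toFinset_cons, Finset.insert_idem] at *
        omega
      · simp only [List.toFinset_cons] at *
        have h3 : (insert x (insert y t'.toFinset)).card ≤ (insert y t'.toFinset).card + 1 :=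
          Finset.card_insert_le _ _
        simp [hxy]
        omega

lemma ab_range' (n s : ℕ) : assignmentBorders (List.range' s n) = n - 1 := by
  induction n generalizing s with
  | zero => rfl
  | succ n ih =>
    rw [List.range'_succ]
    cases n with
    | zero => rfl
    | succ m =>
      rw [List.range'_succ, ab_cons_cons, ← List.range'_succ, ih (s + 1)]
      simp
      omega

lemma ab_cons_self {Z : Type*} (x : Z) (L : List Z) :
    assignmentBorders (x :: x :: L) = assignmentBorders (x :: L) := by
  simp [ab_cons_cons]

lemma ab_range'_concat (s m : ℕ) :
    assignmentBorders (List.range' s (m + 1) ++ [s + m]) = m := by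
  have h1 : List.range' s (m + 1) = List.range' s m ++ [s + m] := by
    have := List.range'_concat (step := 1) (s := s) (n := m)
    simpa using this
  rw [h1, List.append_assoc]
  have : ([s + m] ++ [s + m] : List ℕ) = (s + m) :: [s + m] := rfl
  rw [this, ab_append (List.range' s m) (s + m) [s + m], ← h1, ab_range']
  simp [ab_cons_self, ab_single]

lemma exists_of_valid {V Z : Type*} {zones : V → Set Z} {W : List V} {h : List Z}
    (hv : ValidAssign zones W h) {v : V} (hm : v ∈ W) : ∃ z ∈ h, z ∈ zones v := by
  induction hv with
  | nil => simp at hm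
  | cons hr _ ih =>
    rcases List.mem_cons.1 hm with rfl | hm'
    · exact ⟨_, List.mem_cons_self, hr⟩
    · obtain ⟨z, hz, hz2⟩ := ih hm'
      exact ⟨z, List.mem_cons_of_mem _ hz, hz2⟩

lemma zoaCount_eq {V Z : Type*} (zones : V → Set Z) (W : List V) (m : ℕ)
    (h : List Z) (hv : ValidAssign zones W h) (hb : assignmentBorders h = m)
    (hlow : ∀ g, ValidAssign zones W g → m ≤ assignmentBorders g) :
    zoaCount zones W = 1 + m := by
  unfold zoaCount
  congr 1
  apply le_antisymm
  · exact Nat.sInf_le ⟨h, hv, hb.symm⟩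
  · exact le_csInf ⟨m, h, hv, hb.symm⟩ (by rintro b ⟨g, hg, rfl⟩; exact hlow g hg)

lemma ab_comb {Z : Type*} (h₁ h₂ : List Z) :
    assignmentBorders (h₁ ++ h₂.tail) ≤ assignmentBorders h₁ + 1 + assignmentBorders h₂ := by
  cases h₂ with
  | nil => simp; omega
  | cons z t =>
    cases t with
    | nil => rw [List.tail_cons, List.append_nil, ab_single]; omega
    | cons c t' =>
      simp only [List.tail_cons]
      rcases List.eq_nil_or_concat h₁ with rfl | ⟨A, a, rfl⟩
      · rw [List.nil_append, ab_nil, ab_cons_cons z c t']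
        split <;> omega
      · rw [List.concat_eq_append, List.append_assoc, List.singleton_append,
          ab_append A a (c :: t'), ab_cons_cons z c t', ab_cons_cons a c t',
          ← List.concat_eq_append]
        split <;> split <;> omega

lemma chain'_true {α : Type*} (L : List α) : List.Chain' (fun _ _ => True) L := by
  induction L with
  | nil => exact List.IsChain.nil
  | cons a t ih => cases t with
    | nil => exact List.IsChain.singleton _
    | cons b t' => exact List.IsChain.cons_cons trivial ih

end AuxLemmas

/-- Fix an increasing price function `P`. All zone tariffs with overlap areas
w.r.t. `P` satisfy the no-stopover property if and only if `P` is subadditive: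
`P(k₁+k₂) ≤ P(k₁) + P(k₂)` for all `k₁, k₂ ≥ 1`. -/
theorem zoa_no_stopover_iff (P : ℕ → ℝ)
    (hmono : ∀ k l : ℕ, 1 ≤ k → k ≤ l → P k ≤ P l) :
    (∀ (V Z : Type) (adj : V → V → Prop) (zones : V → Set Z),
        (∀ v, (zones v).Nonempty) →
        NoStopover adj (fun W => P (zoaCount zones W))) ↔
      (∀ k₁ k₂ : ℕ, 1 ≤ k₁ → 1 ≤ k₂ → P (k₁ + k₂) ≤ P k₁ + P k₂) := by
  constructor
  · -- no-stopover → subadditive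
    intro hns k₁ k₂ hk₁ hk₂
    set zones : ℕ → Set ℕ := fun v => if v = 0 then {k₁, k₁ + 1} else {v} with hzdef
    have hzne : ∀ v, (zones v).Nonempty := by
      intro v
      by_cases hv : v = 0 <;> simp [hzdef, hv]
    have hvg : ∀ (Wx : List ℕ) (g : List ℕ), ValidAssign zones Wx g →
        ∀ v : ℕ, v ≠ 0 → v ∈ Wx → v ∈ g := by
      intro Wx g hv v hv0 hm
      obtain ⟨z, hz, hz2⟩ := exists_of_valid hv hm
      simp only [hzdef, if_neg hv0, Set.mem_singleton_iff] at hz2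
      exact hz2 ▸ hz
    have hlow : ∀ (Wx : List ℕ) (a b : ℕ), a ≠ 0 → a ≤ b →
        (∀ v, a ≤ v → v ≤ b → v ∈ Wx) →
        ∀ g, ValidAssign zones Wx g → b - a ≤ assignmentBorders g := by
      intro Wx a b ha hab hmem g hg
      have hsub2 : Finset.Icc a b ⊆ g.toFinset := by
        intro v hv
        rw [Finset.mem_Icc] at hv
        exact List.mem_toFinset.2 (hvg Wx g hg v (by omega) (hmem v hv.1 hv.2))
      have hcard := Finset.card_le_card hsub2
      rw [Nat.card_Icc] at hcard
      have hne : g ≠ [] := List.ne_nil_of_mem (hvg Wx g hg a ha (hmem a le_rfl hab))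
      have := ab_card g hne
      omega
    have hva : ValidAssign zones (List.range' 1 k₁) (List.range' 1 k₁) := by
      rw [ValidAssign, List.forall₂_same]
      intro v hv
      rw [List.mem_range'_1] at hv
      simp [hzdef, show v ≠ 0 by omega]
    have hvb : ValidAssign zones (List.range' (k₁ + 1) k₂) (List.range' (k₁ + 1) k₂) := by
      rw [ValidAssign, List.forall₂_same]
      intro v hv
      rw [List.mem_range'_1] at hv
      simp [hzdef, show v ≠ 0 by omega]
    have hz0k : (k₁ : ℕ) ∈ zones 0 := by simp [hzdef]
    -- the three lists
    have hc1 : zoaCount zones (List.range' 1 k₁ ++ [0]) = 1 + (k₁ - 1) := by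
      apply zoaCount_eq zones _ _ (List.range' 1 k₁ ++ [k₁])
      · exact List.rel_append hva (List.Forall₂.cons hz0k List.Forall₂.nil)
      · obtain ⟨m, rfl⟩ : ∃ m, k₁ = m + 1 := ⟨k₁ - 1, by omega⟩
        have := ab_range'_concat 1 m
        rw [show (1 + m) = m + 1 by omega] at this
        rw [this]
        omega
      · intro g hg
        apply hlow _ 1 k₁ one_ne_zero hk₁ _ g hg
        intro v hv1 hv2
        exact List.mem_append_left _ (List.mem_range'_1.2 ⟨hv1, by omega⟩)
    have hc2 : zoaCount zones (0 :: List.range' (k₁ + 1) k₂) = 1 + (k₂ - 1) := by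
      apply zoaCount_eq zones _ _ ((k₁ + 1) :: List.range' (k₁ + 1) k₂)
      · exact List.Forall₂.cons (by simp [hzdef]) hvb
      · obtain ⟨l, rfl⟩ : ∃ l, k₂ = l + 1 := ⟨k₂ - 1, by omega⟩
        rw [List.range'_succ, ab_cons_self, ← List.range'_succ, ab_range']
      · intro g hg
        have := hlow _ (k₁ + 1) (k₁ + k₂) (by omega) (by omega) ?_ g hg
        · omega
        · intro v hv1 hv2
          exact List.mem_cons_of_mem _ (List.mem_range'_1.2 ⟨hv1, by omega⟩)
    have hc3 : zoaCount zones ((List.range' 1 k₁ ++ [0]) ++ List.range' (k₁ + 1) k₂) =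
        1 + (k₁ + k₂ - 1) := by
      apply zoaCount_eq zones _ _ (List.range' 1 k₁ ++ (k₁ :: List.range' (k₁ + 1) k₂))
      · rw [List.append_assoc, List.singleton_append]
        exact List.rel_append hva (List.Forall₂.cons hz0k hvb)
      · rw [ab_append]
        have h2 : assignmentBorders (k₁ :: List.range' (k₁ + 1) k₂) = k₂ := by
          rw [← List.range'_succ, ab_range']
          omega
        obtain ⟨m, rfl⟩ : ∃ m, k₁ = m + 1 := ⟨k₁ - 1, by omega⟩
        have h1 := ab_range'_concat 1 m
        rw [show (1 + m) = m + 1 by omega] at h1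
        rw [h1, h2]
        omega
      · intro g hg
        have := hlow _ 1 (k₁ + k₂) one_ne_zero (by omega) ?_ g hg
        · omega
        · intro v hv1 hv2
          by_cases hv : v ≤ k₁
          · exact List.mem_append_left _
              (List.mem_append_left _ (List.mem_range'_1.2 ⟨hv1, by omega⟩))
          · exact List.mem_append_right _ (List.mem_range'_1.2 ⟨by omega, by omega⟩)
    have key := hns ℕ ℕ (fun _ _ => True) zones hzne
        ((List.range' 1 k₁ ++ [0]) ++ List.range' (k₁ + 1) k₂)
        (List.range' 1 k₁ ++ [0]) (0 :: List.range' (k₁ + 1) k₂)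
        ⟨by simp, chain'_true _⟩ ⟨by simp, chain'_true _⟩ ⟨by simp, chain'_true _⟩
        ⟨by simp; omega, by simp; omega, by rw [List.getLast?_concat]; rfl, by simp⟩
    simp only [hc1, hc2, hc3] at key
    rw [show 1 + (k₁ + k₂ - 1) = k₁ + k₂ by omega, show 1 + (k₁ - 1) = k₁ by omega,
      show 1 + (k₂ - 1) = k₂ by omega] at key
    exact key
  · -- subadditive → no-stopover
    intro hsub V Z adj zones hzne
    intro W W₁ W₂ hW hW₁ hW₂ hsplit
    obtain ⟨hl₁, hl₂, hjun, hWeq⟩ := hsplit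
    choose f hf using hzne
    have hdef : ∀ L : List V, ValidAssign zones L (L.map f) := fun L =>
      List.forall₂_map_right_iff.2 (List.forall₂_same.2 fun v _ => hf v)
    obtain ⟨h₁, hh₁v, hh₁b⟩ := Nat.sInf_mem
      (⟨_, _, hdef W₁, rfl⟩ : { b | ∃ h : List Z, ValidAssign zones W₁ h ∧
        b = assignmentBorders h }.Nonempty)
    obtain ⟨h₂, hh₂v, hh₂b⟩ := Nat.sInf_mem
      (⟨_, _, hdef W₂, rfl⟩ : { b | ∃ h : List Z, ValidAssign zones W₂ h ∧
        b = assignmentBorders h }.Nonempty)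
    have hcomb : ValidAssign zones W (h₁ ++ h₂.tail) := by
      rw [hWeq]
      have ht : List.Forall₂ (fun v z => z ∈ zones v) W₂.tail h₂.tail := by
        have := List.forall₂_drop 1 hh₂v
        simpa [List.drop_one] using this
      exact List.rel_append hh₁v ht
    have hWle : sInf { b | ∃ h : List Z, ValidAssign zones W h ∧ b = assignmentBorders h } ≤
        assignmentBorders h₁ + 1 + assignmentBorders h₂ :=
      le_trans (Nat.sInf_le ⟨_, hcomb, rfl⟩) (ab_comb h₁ h₂)
    have hcount : zoaCount zones W ≤ zoaCount zones W₁ + zoaCount zones W₂ := by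
      unfold zoaCount
      omega
    calc P (zoaCount zones W) ≤ P (zoaCount zones W₁ + zoaCount zones W₂) :=
          hmono _ _ (by unfold zoaCount; omega) hcount
      _ ≤ _ := hsub _ _ (by unfold zoaCount; omega) (by unfold zoaCount; omega)
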